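/- For all positive integers r and κ, setting ε ∈ {0,1} with ε ≡ 1 + r (mod 2), one has ∑_{l=0}^{⌊r/2⌋} ∏_{j=0}^{l-1} [(r-2j)(r-2j-1)] / [(2j+2)(2κ+2j+1)] = (Γ(κ+1/2)/Γ((ε-r)/2)) · ∑_{l=0}^{⌊r/2⌋} (-1)^l · binom(⌊r/2⌋, l) · Γ(l+(ε-r)/2) / Γ(l+κ+1/2), where Γ is the real Gamma function and the empty product corresponding to l = 0 has value one. -/

import Mathlib

private lemma gamma_shift (a : ℝ) (h : ∀ j : ℕ, a + (j : ℝ) ≠ 0) (l : ℕ) :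
    Real.Gamma ((l : ℝ) + a) = (∏ j ∈ Finset.range l, (a + (j : ℝ))) * Real.Gamma a := by
  induction l with
  | zero => simp
  | succ n ih =>
    have h1 : ((n + 1 : ℕ) : ℝ) + a = ((n : ℝ) + a) + 1 := by push_cast; ring
    have h2 : (n : ℝ) + a ≠ 0 := by
      intro hc; exact h n (by linarith)
    rw [h1, Real.Gamma_add_one h2, ih, Finset.prod_range_succ]
    ring

/-- The sum of Lemma A.2 can be rewritten in terms of Gamma values:
for positive integers `r, κ`, with `ε ∈ {0,1}`, `ε ≡ 1 + r (mod 2)`,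
`∑_{l=0}^{⌊r/2⌋} ∏_{j=0}^{l-1} (r-2j)(r-2j-1)/((2j+2)(2κ+2j+1))
  = Γ(κ+1/2)/Γ((ε-r)/2) · ∑_{l=0}^{⌊r/2⌋} (-1)^l C(⌊r/2⌋,l) Γ(l+(ε-r)/2)/Γ(l+κ+1/2)`. -/
theorem monster_identity_one_gamma_form (r κ : ℕ) (hr : 1 ≤ r) (hκ : 1 ≤ κ)
    (ε : ℕ) (hε : ε < 2) (hmod : ε % 2 = (1 + r) % 2) :
    ∑ l ∈ Finset.range (r / 2 + 1), ∏ j ∈ Finset.range l,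
        (((r : ℝ) - 2 * j) * ((r : ℝ) - 2 * j - 1)) /
          ((2 * (j : ℝ) + 2) * (2 * (κ : ℝ) + 2 * j + 1)) =
      Real.Gamma ((κ : ℝ) + 1 / 2) / Real.Gamma (((ε : ℝ) - r) / 2) *
        ∑ l ∈ Finset.range (r / 2 + 1),
          (-1 : ℝ) ^ l * ((r / 2).choose l : ℝ) *
            Real.Gamma ((l : ℝ) + ((ε : ℝ) - r) / 2) /
              Real.Gamma ((l : ℝ) + κ + 1 / 2) := by
  set m := r / 2 with hm
  set a : ℝ := ((ε : ℝ) - r) / 2 with hadef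
  set b : ℝ := (κ : ℝ) + 1 / 2 with hbdef
  have hb : ∀ j : ℕ, b + (j : ℝ) ≠ 0 := by
    intro j
    have : (0 : ℝ) < b + j := by rw [hbdef]; positivity
    exact this.ne'
  have ha : ∀ j : ℕ, a + (j : ℝ) ≠ 0 := by
    intro j hc
    have h1 : (ε : ℝ) + 2 * j = r := by rw [hadef] at hc; linarith
    have h2 : ε + 2 * j = r := by exact_mod_cast h1
    omega
  have hGa : Real.Gamma a ≠ 0 := by
    apply Real.Gamma_ne_zero
    intro n hc
    have h1 : (ε : ℝ) + 2 * n = r := by rw [hadef] at hc; linarith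
    have h2 : ε + 2 * n = r := by exact_mod_cast h1
    omega
  have hGb : Real.Gamma b ≠ 0 := by
    have : (0 : ℝ) < b := by rw [hbdef]; positivity
    exact (Real.Gamma_pos_of_pos this).ne'
  rw [Finset.mul_sum]
  apply Finset.sum_congr rfl
  intro l hl
  have hlm : l ≤ m := by
    have := Finset.mem_range.mp hl; omega
  have hbl : (l : ℝ) + κ + 1 / 2 = (l : ℝ) + b := by rw [hbdef]; ring
  rw [hbl, gamma_shift a ha l, gamma_shift b hb l]
  -- cast of choose as quotient of products
  have hdesc : ((m.descFactorial l : ℕ) : ℝ) = ∏ j ∈ Finset.range l, ((m : ℝ) - j) := by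
    rw [Nat.descFactorial_eq_prod_range, Nat.cast_prod]
    apply Finset.prod_congr rfl
    intro j hj
    have : j ≤ m := le_trans (Finset.mem_range.mp hj).le hlm
    push_cast [Nat.cast_sub this]
    ring
  have hfact : ((l.factorial : ℕ) : ℝ) = ∏ j ∈ Finset.range l, ((j : ℝ) + 1) := by
    rw [← Finset.prod_range_add_one_eq_factorial, Nat.cast_prod]
    push_cast; rfl
  have hfact_ne : (∏ j ∈ Finset.range l, ((j : ℝ) + 1)) ≠ 0 := by
    apply Finset.prod_ne_zero_iff.mpr
    intro j _; positivity
  have hC : ((m.choose l : ℕ) : ℝ) =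
      (∏ j ∈ Finset.range l, ((m : ℝ) - j)) / (∏ j ∈ Finset.range l, ((j : ℝ) + 1)) := by
    have h1 : ((m.descFactorial l : ℕ) : ℝ) = ((l.factorial : ℕ) : ℝ) * ((m.choose l : ℕ) : ℝ) := by
      rw [← Nat.cast_mul, Nat.descFactorial_eq_factorial_mul_choose]
    rw [eq_div_iff hfact_ne, ← hfact, ← hdesc, h1]; ring
  have hprodb_ne : (∏ j ∈ Finset.range l, (b + (j : ℝ))) ≠ 0 :=
    Finset.prod_ne_zero_iff.mpr fun j _ => hb j
  -- key: LHS product equals the combined product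
  have hkey : (∏ j ∈ Finset.range l,
        (((r : ℝ) - 2 * j) * ((r : ℝ) - 2 * j - 1)) /
          ((2 * (j : ℝ) + 2) * (2 * (κ : ℝ) + 2 * j + 1))) =
      ∏ j ∈ Finset.range l,
        ((-1 : ℝ) * ((m : ℝ) - j) * (a + j)) / (((j : ℝ) + 1) * (b + j)) := by
    apply Finset.prod_congr rfl
    intro j _
    have hd1 : (2 * (j : ℝ) + 2) ≠ 0 := by positivity
    have hd2 : (2 * (κ : ℝ) + 2 * j + 1) ≠ 0 := by positivity
    have hd3 : ((j : ℝ) + 1) ≠ 0 := by positivity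
    have hd4 : (b + (j : ℝ)) ≠ 0 := hb j
    rcases Nat.even_or_odd r with he | ho
    · have hr2 : r % 2 = 0 := Nat.even_iff.mp he
      have hε1 : ε = 1 := by omega
      have hmr : (m : ℝ) = (r : ℝ) / 2 := by
        have h2 : 2 * m = r := by omega
        have : (2 : ℝ) * m = r := by exact_mod_cast h2
        linarith
      rw [hadef, hbdef, hmr, hε1]
      push_cast
      field_simp
      ring
    · have hr2 : r % 2 = 1 := Nat.odd_iff.mp ho
      have hε0 : ε = 0 := by omega
      have hmr : (m : ℝ) = ((r : ℝ) - 1) / 2 := by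
        have h2 : 2 * m + 1 = r := by omega
        have : (2 : ℝ) * m + 1 = r := by exact_mod_cast h2
        linarith
      rw [hadef, hbdef, hmr, hε0]
      push_cast
      field_simp
      ring
  rw [hkey, hC]
  rw [Finset.prod_div_distrib, Finset.prod_mul_distrib, Finset.prod_mul_distrib,
    Finset.prod_const, Finset.card_range]
  field_simp
  rw [Finset.prod_mul_distrib]
  have hc : (∏ x ∈ Finset.range l, (1 + (x : ℝ))) ≠ 0 := by simpa [add_comm] using hfact_ne
  ring_nf
  field_simp
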